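/- Suppose q satisfies E[q(Z,A,X) | M=m, A=a, X=x, G=O] = p(M=m | A=a, X=x, G=E) / (p(M=m | A=a, X=x, G=O)·P(A=a | X=x, G=O)) for all m. Under internal validity M^(a) ⫫ A | (X, G=E) and external validity M^(a) ⫫ G | X and consistency, this equals 1 / P(A=a | M^(a)=m, X=x, G=O). -/

import Mathlib

open MeasureTheory

/-- Conditional expectation of `W` given the event `s`. -/
noncomputable def cexp {Ω : Type*} [MeasurableSpace Ω] (μ : Measure Ω)
    (W : Ω → ℝ) (s : Set Ω) : ℝ :=
  (∫ ω in s, W ω ∂μ) / (μ s).toReal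

/-- Conditional probability of `s` given the event `t`. -/
noncomputable def cpr {Ω : Type*} [MeasurableSpace Ω] (μ : Measure Ω)
    (s t : Set Ω) : ℝ :=
  (μ (s ∩ t)).toReal / (μ t).toReal

/-- Conditional independence of the random variable `W` and the event `s`,
given the event `C`. -/
def CIset {Ω : Type*} [MeasurableSpace Ω] (μ : Measure Ω) {β : Type*} [MeasurableSpace β]
    (W : Ω → β) (s C : Set Ω) : Prop :=
  ∀ S : Set β, MeasurableSet S →
    (μ (W ⁻¹' S ∩ s ∩ C)).toReal * (μ C).toReal
      = (μ (W ⁻¹' S ∩ C)).toReal * (μ (s ∩ C)).toReal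

/-- Conditional independence of the random variables `W1` and `W2`
given the event `C`. -/
def CIfun2 {Ω : Type*} [MeasurableSpace Ω] (μ : Measure Ω)
    {β1 β2 : Type*} [MeasurableSpace β1] [MeasurableSpace β2]
    (W1 : Ω → β1) (W2 : Ω → β2) (C : Set Ω) : Prop :=
  ∀ (S1 : Set β1) (S2 : Set β2), MeasurableSet S1 → MeasurableSet S2 →
    (μ (W1 ⁻¹' S1 ∩ W2 ⁻¹' S2 ∩ C)).toReal * (μ C).toReal
      = (μ (W1 ⁻¹' S1 ∩ C)).toReal * (μ (W2 ⁻¹' S2 ∩ C)).toReal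

/-- Domain indicator: observational (`O`) or experimental (`E`). -/
inductive Dom : Type
  | O
  | E
deriving DecidableEq

/-- Conditional CDF of `W` given the event `C`. -/
noncomputable def ccdf {Ω : Type*} [MeasurableSpace Ω] (μ : Measure Ω)
    (W : Ω → ℝ) (C : Set Ω) (w : ℝ) : ℝ :=
  (μ ({ω | W ω ≤ w} ∩ C)).toReal / (μ C).toReal


theorem stmt14 {Ω 𝓩 𝓧 : Type*} [MeasurableSpace Ω]
    (μ : Measure Ω) [IsProbabilityMeasure μ]
    (A M M0 M1 : Ω → ℝ) (Z : Ω → 𝓩) (X : Ω → 𝓧) (G : Ω → Dom)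
    (q : 𝓩 → ℝ → 𝓧 → ℝ)
    (hAbin : ∀ ω, A ω = 0 ∨ A ω = 1)
    (hcons : ∀ ω, M ω = A ω * M1 ω + (1 - A ω) * M0 ω)
    -- q solves the conditional moment equation
    (hq : ∀ (m : ℝ) (a : ℝ) (x : 𝓧),
      μ ({ω | M ω = m} ∩ {ω | A ω = a} ∩ {ω | X ω = x} ∩ {ω | G ω = Dom.O}) ≠ 0 →
      cexp μ (fun ω => q (Z ω) (A ω) (X ω))
          ({ω | M ω = m} ∩ {ω | A ω = a} ∩ {ω | X ω = x} ∩ {ω | G ω = Dom.O})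
        = cpr μ {ω | M ω = m} ({ω | A ω = a} ∩ {ω | X ω = x} ∩ {ω | G ω = Dom.E})
          / (cpr μ {ω | M ω = m} ({ω | A ω = a} ∩ {ω | X ω = x} ∩ {ω | G ω = Dom.O})
            * cpr μ {ω | A ω = a} ({ω | X ω = x} ∩ {ω | G ω = Dom.O})))
    -- internal validity: M^(a) ⫫ A | (X, G = E)
    (hInternal : ∀ a : ℝ, a = 0 ∨ a = 1 → ∀ (x : 𝓧) (a' : ℝ),
      CIset μ (fun ω => a * M1 ω + (1 - a) * M0 ω) {ω | A ω = a'}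
        ({ω | X ω = x} ∩ {ω | G ω = Dom.E}))
    -- external validity: M^(a) ⫫ G | X
    (hExternal : ∀ a : ℝ, a = 0 ∨ a = 1 → ∀ (x : 𝓧) (g : Dom),
      CIset μ (fun ω => a * M1 ω + (1 - a) * M0 ω) {ω | G ω = g} {ω | X ω = x}) :
    ∀ a : ℝ, a = 0 ∨ a = 1 → ∀ (m : ℝ) (x : 𝓧),
      μ ({ω | M ω = m} ∩ {ω | A ω = a} ∩ {ω | X ω = x} ∩ {ω | G ω = Dom.O}) ≠ 0 →
      μ ({ω | A ω = a} ∩ {ω | X ω = x} ∩ {ω | G ω = Dom.E}) ≠ 0 →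
      μ ({ω | A ω = a} ∩ {ω | X ω = x} ∩ {ω | G ω = Dom.O}) ≠ 0 →
      μ ({ω | X ω = x} ∩ {ω | G ω = Dom.O}) ≠ 0 →
      μ ({ω | a * M1 ω + (1 - a) * M0 ω = m} ∩ {ω | X ω = x} ∩ {ω | G ω = Dom.O}) ≠ 0 →
      cpr μ {ω | M ω = m} ({ω | A ω = a} ∩ {ω | X ω = x} ∩ {ω | G ω = Dom.E})
          / (cpr μ {ω | M ω = m} ({ω | A ω = a} ∩ {ω | X ω = x} ∩ {ω | G ω = Dom.O})
            * cpr μ {ω | A ω = a} ({ω | X ω = x} ∩ {ω | G ω = Dom.O}))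
        = 1 / cpr μ {ω | A ω = a}
            ({ω | a * M1 ω + (1 - a) * M0 ω = m} ∩ {ω | X ω = x} ∩ {ω | G ω = Dom.O}) := by
  intro a ha m x hMAXO hAXE hAXO hXO hMXO
  have tR : ∀ s : Set Ω, μ s ≠ 0 → (μ s).toReal ≠ 0 :=
    fun s h => ENNReal.toReal_ne_zero.mpr ⟨h, measure_ne_top μ s⟩
  have hMaM : ∀ ω, A ω = a → (M ω = m ↔ a * M1 ω + (1 - a) * M0 ω = m) := by
    intro ω hA; rw [hcons ω, hA]
  -- canonicalize sets
  have e1 : {ω | M ω = m} ∩ {ω | A ω = a} ∩ {ω | X ω = x} ∩ {ω | G ω = Dom.O}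
      = {ω | a * M1 ω + (1 - a) * M0 ω = m} ∩ {ω | A ω = a} ∩ {ω | X ω = x}
        ∩ {ω | G ω = Dom.O} := by
    ext ω
    simp only [Set.mem_inter_iff, Set.mem_setOf_eq]
    constructor
    · rintro ⟨⟨⟨h1, h2⟩, h3⟩, h4⟩; exact ⟨⟨⟨(hMaM ω h2).1 h1, h2⟩, h3⟩, h4⟩
    · rintro ⟨⟨⟨h1, h2⟩, h3⟩, h4⟩; exact ⟨⟨⟨(hMaM ω h2).2 h1, h2⟩, h3⟩, h4⟩
  have e2 : {ω | M ω = m} ∩ ({ω | A ω = a} ∩ {ω | X ω = x} ∩ {ω | G ω = Dom.O})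
      = {ω | a * M1 ω + (1 - a) * M0 ω = m} ∩ {ω | A ω = a} ∩ {ω | X ω = x}
        ∩ {ω | G ω = Dom.O} := by
    ext ω
    simp only [Set.mem_inter_iff, Set.mem_setOf_eq]
    constructor
    · rintro ⟨h1, ⟨h2, h3⟩, h4⟩; exact ⟨⟨⟨(hMaM ω h2).1 h1, h2⟩, h3⟩, h4⟩
    · rintro ⟨⟨⟨h1, h2⟩, h3⟩, h4⟩; exact ⟨(hMaM ω h2).2 h1, ⟨h2, h3⟩, h4⟩
  have e3 : {ω | M ω = m} ∩ ({ω | A ω = a} ∩ {ω | X ω = x} ∩ {ω | G ω = Dom.E})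
      = {ω | a * M1 ω + (1 - a) * M0 ω = m} ∩ {ω | A ω = a} ∩ {ω | X ω = x}
        ∩ {ω | G ω = Dom.E} := by
    ext ω
    simp only [Set.mem_inter_iff, Set.mem_setOf_eq]
    constructor
    · rintro ⟨h1, ⟨h2, h3⟩, h4⟩; exact ⟨⟨⟨(hMaM ω h2).1 h1, h2⟩, h3⟩, h4⟩
    · rintro ⟨⟨⟨h1, h2⟩, h3⟩, h4⟩; exact ⟨(hMaM ω h2).2 h1, ⟨h2, h3⟩, h4⟩
  have e4 : {ω | A ω = a} ∩ ({ω | a * M1 ω + (1 - a) * M0 ω = m} ∩ {ω | X ω = x}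
        ∩ {ω | G ω = Dom.O})
      = {ω | a * M1 ω + (1 - a) * M0 ω = m} ∩ {ω | A ω = a} ∩ {ω | X ω = x}
        ∩ {ω | G ω = Dom.O} := by
    ext ω; simp only [Set.mem_inter_iff, Set.mem_setOf_eq]; tauto
  have e5 : {ω | A ω = a} ∩ ({ω | X ω = x} ∩ {ω | G ω = Dom.O})
      = {ω | A ω = a} ∩ {ω | X ω = x} ∩ {ω | G ω = Dom.O} := by
    ext ω; simp only [Set.mem_inter_iff, Set.mem_setOf_eq]; tauto
  -- internal validity with S = {m}
  have hInt := hInternal a ha x a {m} (measurableSet_singleton m)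
  have hpre : (fun ω => a * M1 ω + (1 - a) * M0 ω) ⁻¹' ({m} : Set ℝ)
      = {ω | a * M1 ω + (1 - a) * M0 ω = m} := by
    ext ω; simp
  rw [hpre] at hInt
  have eI1 : {ω | a * M1 ω + (1 - a) * M0 ω = m} ∩ {ω | A ω = a}
      ∩ ({ω | X ω = x} ∩ {ω | G ω = Dom.E})
      = {ω | a * M1 ω + (1 - a) * M0 ω = m} ∩ {ω | A ω = a} ∩ {ω | X ω = x}
        ∩ {ω | G ω = Dom.E} := by
    ext ω; simp only [Set.mem_inter_iff, Set.mem_setOf_eq]; tauto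
  have eI2 : {ω | a * M1 ω + (1 - a) * M0 ω = m} ∩ ({ω | X ω = x} ∩ {ω | G ω = Dom.E})
      = {ω | a * M1 ω + (1 - a) * M0 ω = m} ∩ {ω | X ω = x} ∩ {ω | G ω = Dom.E} := by
    ext ω; simp only [Set.mem_inter_iff, Set.mem_setOf_eq]; tauto
  have eI3 : {ω | A ω = a} ∩ ({ω | X ω = x} ∩ {ω | G ω = Dom.E})
      = {ω | A ω = a} ∩ {ω | X ω = x} ∩ {ω | G ω = Dom.E} := by
    ext ω; simp only [Set.mem_inter_iff, Set.mem_setOf_eq]; tauto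
  rw [eI1, eI2, eI3] at hInt
  -- external validity with g = E and g = O
  have hExtE := hExternal a ha x Dom.E {m} (measurableSet_singleton m)
  have hExtO := hExternal a ha x Dom.O {m} (measurableSet_singleton m)
  rw [hpre] at hExtE hExtO
  have eE1 : {ω | a * M1 ω + (1 - a) * M0 ω = m} ∩ {ω | G ω = Dom.E} ∩ {ω | X ω = x}
      = {ω | a * M1 ω + (1 - a) * M0 ω = m} ∩ {ω | X ω = x} ∩ {ω | G ω = Dom.E} := by
    ext ω; simp only [Set.mem_inter_iff, Set.mem_setOf_eq]; tauto
  have eE2 : {ω | G ω = Dom.E} ∩ {ω | X ω = x} = {ω | X ω = x} ∩ {ω | G ω = Dom.E} := by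
    ext ω; simp only [Set.mem_inter_iff, Set.mem_setOf_eq]; tauto
  have eO1 : {ω | a * M1 ω + (1 - a) * M0 ω = m} ∩ {ω | G ω = Dom.O} ∩ {ω | X ω = x}
      = {ω | a * M1 ω + (1 - a) * M0 ω = m} ∩ {ω | X ω = x} ∩ {ω | G ω = Dom.O} := by
    ext ω; simp only [Set.mem_inter_iff, Set.mem_setOf_eq]; tauto
  have eO2 : {ω | G ω = Dom.O} ∩ {ω | X ω = x} = {ω | X ω = x} ∩ {ω | G ω = Dom.O} := by
    ext ω; simp only [Set.mem_inter_iff, Set.mem_setOf_eq]; tauto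
  rw [eE1, eE2] at hExtE
  rw [eO1, eO2] at hExtO
  -- nonzeroness of auxiliary measures
  have hsubE : ({ω | A ω = a} ∩ {ω | X ω = x} ∩ {ω | G ω = Dom.E} : Set Ω)
      ⊆ {ω | X ω = x} ∩ {ω | G ω = Dom.E} := fun ω h => ⟨h.1.2, h.2⟩
  have hXE : μ ({ω | X ω = x} ∩ {ω | G ω = Dom.E}) ≠ 0 := fun h0 => hAXE
    (measure_mono_null hsubE h0)
  have hX : μ ({ω | X ω = x} : Set Ω) ≠ 0 := fun h0 => hXO
    (measure_mono_null Set.inter_subset_left h0)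
  rw [e1] at hMAXO
  -- real-number abbreviations
  set n1 := (μ ({ω | a * M1 ω + (1 - a) * M0 ω = m} ∩ {ω | A ω = a} ∩ {ω | X ω = x}
    ∩ {ω | G ω = Dom.E})).toReal with hn1
  set dE := (μ ({ω | A ω = a} ∩ {ω | X ω = x} ∩ {ω | G ω = Dom.E})).toReal with hdE
  set n2 := (μ ({ω | a * M1 ω + (1 - a) * M0 ω = m} ∩ {ω | A ω = a} ∩ {ω | X ω = x}
    ∩ {ω | G ω = Dom.O})).toReal with hn2
  set dO := (μ ({ω | A ω = a} ∩ {ω | X ω = x} ∩ {ω | G ω = Dom.O})).toReal with hdO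
  set eXO := (μ ({ω | X ω = x} ∩ {ω | G ω = Dom.O})).toReal with heXO
  set eXE := (μ ({ω | X ω = x} ∩ {ω | G ω = Dom.E})).toReal with heXE
  set mXO := (μ ({ω | a * M1 ω + (1 - a) * M0 ω = m} ∩ {ω | X ω = x}
    ∩ {ω | G ω = Dom.O})).toReal with hmXO
  set mXE := (μ ({ω | a * M1 ω + (1 - a) * M0 ω = m} ∩ {ω | X ω = x}
    ∩ {ω | G ω = Dom.E})).toReal with hmXE
  set pX := (μ ({ω | X ω = x} : Set Ω)).toReal with hpX
  set mX := (μ ({ω | a * M1 ω + (1 - a) * M0 ω = m} ∩ {ω | X ω = x})).toReal with hmX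
  have hn2' : n2 ≠ 0 := tR _ hMAXO
  have hdE' : dE ≠ 0 := tR _ hAXE
  have hdO' : dO ≠ 0 := tR _ hAXO
  have heXO' : eXO ≠ 0 := tR _ hXO
  have heXE' : eXE ≠ 0 := tR _ hXE
  have hmXO' : mXO ≠ 0 := tR _ hMXO
  have hpX' : pX ≠ 0 := tR _ hX
  -- key algebraic identities
  have key1 : n1 * pX = mX * dE := by
    apply mul_right_cancel₀ heXE'
    linear_combination pX * hInt + dE * hExtE
  have key2 : n1 * eXO = mXO * dE := by
    apply mul_right_cancel₀ hpX'
    linear_combination eXO * key1 - dE * hExtO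
  -- finish
  unfold cpr
  rw [e2, e3, e4, e5, ← hn1, ← hn2, ← heXO]
  rw [← hdO, ← hmXO, ← hdE]
  field_simp
  linear_combination key2
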